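/- For α, β > -1, n ≥ 1, m ≥ 1, and x ∈ (0,1), the moments of the Beta operator satisfy the recursion (n+m+α+β+2) T_{n,m+1}^{α,β}(x) = m x(1-x) T_{n,m-1}^{α,β}(x) + [m+α+1-(2m+α+β+2)x] T_{n,m}^{α,β}(x). -/

import Mathlib

open MeasureTheory intervalIntegral Filter

/-- The Beta operator with Jacobi weights: `B_n^{α,β}(f;x)`. -/
noncomputable def Bop (n α β : ℝ) (f : ℝ → ℝ) (x : ℝ) : ℝ :=
  (∫ t in (0:ℝ)..1, t ^ (n * x + α) * (1 - t) ^ (n - n * x + β) * f t) /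
  (∫ t in (0:ℝ)..1, t ^ (n * x + α) * (1 - t) ^ (n - n * x + β))

/-- The `m`-th central moment `T_{n,m}^{α,β}(x)`. -/
noncomputable def T (n α β : ℝ) (m : ℕ) (x : ℝ) : ℝ :=
  Bop n α β (fun t => (t - x) ^ m) x

lemma aux_integrable (p q : ℝ) (hp : -1 < p) (hq : -1 < q) {g : ℝ → ℝ} (hg : Continuous g) :
    IntervalIntegrable (fun t : ℝ => t ^ p * (1 - t) ^ q * g t) volume 0 1 := by
  have h1 : IntervalIntegrable (fun t : ℝ => t ^ p * (1 - t) ^ q * g t) volume 0 (1/2) := by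
    have hint : IntervalIntegrable (fun t : ℝ => t ^ p) volume 0 (1/2) :=
      intervalIntegral.intervalIntegrable_rpow' hp
    have hcont : ContinuousOn (fun t : ℝ => (1 - t) ^ q * g t) (Set.uIcc 0 (1/2)) := by
      apply ContinuousOn.mul _ hg.continuousOn
      apply ContinuousOn.rpow_const (by fun_prop)
      intro t ht
      rw [Set.uIcc_of_le (by norm_num)] at ht
      left
      have := ht.2
      intro h
      nlinarith
    have heq : (fun t : ℝ => t ^ p * (1 - t) ^ q * g t)
        = fun t : ℝ => t ^ p * ((1 - t) ^ q * g t) := by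
      funext t; ring
    rw [heq]
    exact hint.mul_continuousOn hcont
  have h2 : IntervalIntegrable (fun t : ℝ => t ^ p * (1 - t) ^ q * g t) volume (1/2) 1 := by
    have hint : IntervalIntegrable (fun t : ℝ => (1 - t) ^ q) volume (1/2) 1 := by
      have := (intervalIntegral.intervalIntegrable_rpow' (r := q) hq
        (a := 1/2) (b := 0)).comp_sub_left 1
      norm_num at this
      exact this
    have hcont : ContinuousOn (fun t : ℝ => t ^ p * g t) (Set.uIcc (1/2) 1) := by
      apply ContinuousOn.mul _ hg.continuousOn
      apply ContinuousOn.rpow_const continuousOn_id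
      intro t ht
      rw [Set.uIcc_of_le (by norm_num)] at ht
      left
      have := ht.1
      intro h
      simp only [id_eq] at h
      nlinarith
    have heq : (fun t : ℝ => t ^ p * (1 - t) ^ q * g t)
        = fun t : ℝ => (1 - t) ^ q * (t ^ p * g t) := by
      funext t; ring
    rw [heq]
    exact hint.mul_continuousOn hcont
  exact h1.trans h2

lemma aux_pos (p q : ℝ) (hp : -1 < p) (hq : -1 < q) :
    0 < ∫ t in (0:ℝ)..1, t ^ p * (1 - t) ^ q := by
  have h := aux_integrable p q hp hq (g := fun _ => 1) continuous_const
  simp only [mul_one] at h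
  apply intervalIntegral.intervalIntegral_pos_of_pos_on h
  · intro t ht
    have h1 : (0:ℝ) < t := ht.1
    have h2 : (0:ℝ) < 1 - t := by linarith [ht.2]
    exact mul_pos (Real.rpow_pos_of_pos h1 p) (Real.rpow_pos_of_pos h2 q)
  · norm_num

theorem moment_recursion (α β : ℝ) (hα : α > -1) (hβ : β > -1)
    (n m : ℕ) (hn : 1 ≤ n) (hm : 1 ≤ m) (x : ℝ) (hx : x ∈ Set.Ioo (0:ℝ) 1) :
    (n + m + α + β + 2) * T n α β (m + 1) x =
      m * (x * (1 - x)) * T n α β (m - 1) x +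
        (m + α + 1 - (2 * m + α + β + 2) * x) * T n α β m x := by
  obtain ⟨hx0, hx1⟩ := hx
  obtain ⟨k, rfl⟩ : ∃ k, m = k + 1 := ⟨m - 1, by omega⟩
  have hn' : (1:ℝ) ≤ (n:ℝ) := by exact_mod_cast hn
  set p : ℝ := (n:ℝ) * x + α with hp_def
  set q : ℝ := (n:ℝ) - (n:ℝ) * x + β with hq_def
  have hnx : (0:ℝ) < (n:ℝ) * x := mul_pos (by linarith) hx0
  have hnx1 : (0:ℝ) < (n:ℝ) * (1 - x) := mul_pos (by linarith) (by linarith)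
  have hp : -1 < p := by rw [hp_def]; nlinarith
  have hq : -1 < q := by rw [hq_def]; nlinarith
  have hp1 : (0:ℝ) < p + 1 := by linarith
  have hq1 : (0:ℝ) < q + 1 := by linarith
  -- coefficients
  set C2 : ℝ := -((n:ℝ) + ((k:ℝ) + 1) + α + β + 2) with hC2
  set C1 : ℝ := ((k:ℝ) + 1) + α + 1 - (2 * ((k:ℝ) + 1) + α + β + 2) * x with hC1
  set C0 : ℝ := ((k:ℝ) + 1) * (x * (1 - x)) with hC0
  have hI : ∀ j : ℕ, IntervalIntegrable
      (fun t : ℝ => t ^ p * (1 - t) ^ q * (t - x) ^ j) volume 0 1 := by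
    intro j
    exact aux_integrable p q hp hq (by fun_prop)
  -- FTC
  have key : (∫ t in (0:ℝ)..1, t ^ p * (1 - t) ^ q *
      (C2 * (t - x) ^ (k + 2) + C1 * (t - x) ^ (k + 1) + C0 * (t - x) ^ k)) = 0 := by
    have hFcont : ContinuousOn
        (fun t : ℝ => t ^ (p + 1) * ((1 - t) ^ (q + 1) * (t - x) ^ (k + 1)))
        (Set.Icc 0 1) := by
      apply ContinuousOn.mul
      · exact ContinuousOn.rpow_const continuousOn_id (fun t _ => Or.inr (by linarith))
      · apply ContinuousOn.mul
        · exact ContinuousOn.rpow_const (by fun_prop) (fun t _ => Or.inr (by linarith))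
        · fun_prop
    have hderiv : ∀ t ∈ Set.Ioo (0:ℝ) 1,
        HasDerivAt (fun t : ℝ => t ^ (p + 1) * ((1 - t) ^ (q + 1) * (t - x) ^ (k + 1)))
          (t ^ p * (1 - t) ^ q *
            (C2 * (t - x) ^ (k + 2) + C1 * (t - x) ^ (k + 1) + C0 * (t - x) ^ k)) t := by
      intro t ht
      have ht0 : (0:ℝ) < t := ht.1
      have ht1 : (0:ℝ) < 1 - t := by linarith [ht.2]
      have hA : HasDerivAt (fun t : ℝ => t ^ (p + 1)) ((p + 1) * t ^ p) t := by
        simpa using Real.hasDerivAt_rpow_const (x := t) (p := p + 1) (Or.inl ht0.ne')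
      have hB : HasDerivAt (fun t : ℝ => (1 - t) ^ (q + 1)) (-1 * (q + 1) * (1 - t) ^ q) t := by
        have h1 : HasDerivAt (fun t : ℝ => 1 - t) (-1) t := by
          simpa using (hasDerivAt_id t).const_sub 1
        simpa using h1.rpow_const (p := q + 1) (Or.inl ht1.ne')
      have hC : HasDerivAt (fun t : ℝ => (t - x) ^ (k + 1)) (((k:ℝ) + 1) * (t - x) ^ k) t := by
        have := ((hasDerivAt_id t).sub_const x).fun_pow (k + 1)
        simpa using this
      have hprod := hA.fun_mul (hB.fun_mul hC)
      refine hprod.congr_deriv ?_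
      have e1 : t ^ (p + 1) = t ^ p * t := Real.rpow_add_one ht0.ne' p
      have e2 : (1 - t) ^ (q + 1) = (1 - t) ^ q * (1 - t) := Real.rpow_add_one ht1.ne' q
      rw [e1, e2, hC2, hC1, hC0, hp_def, hq_def]
      ring
    have hint : IntervalIntegrable (fun t : ℝ => t ^ p * (1 - t) ^ q *
        (C2 * (t - x) ^ (k + 2) + C1 * (t - x) ^ (k + 1) + C0 * (t - x) ^ k)) volume 0 1 :=
      aux_integrable p q hp hq (by fun_prop)
    rw [intervalIntegral.integral_eq_sub_of_hasDeriv_right_of_le (by norm_num) hFcont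
      (fun t ht => (hderiv t ht).hasDerivWithinAt) hint]
    rw [show (1:ℝ) - 1 = 0 by ring]
    rw [Real.zero_rpow (ne_of_gt hq1), Real.zero_rpow (ne_of_gt hp1)]
    ring
  -- split the integral
  have heq : (fun t : ℝ => t ^ p * (1 - t) ^ q *
      (C2 * (t - x) ^ (k + 2) + C1 * (t - x) ^ (k + 1) + C0 * (t - x) ^ k))
      = fun t : ℝ => C2 * (t ^ p * (1 - t) ^ q * (t - x) ^ (k + 2)) +
          (C1 * (t ^ p * (1 - t) ^ q * (t - x) ^ (k + 1)) +
           C0 * (t ^ p * (1 - t) ^ q * (t - x) ^ k)) := by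
    funext t; ring
  rw [heq, intervalIntegral.integral_add ((hI (k + 2)).const_mul C2)
        (((hI (k + 1)).const_mul C1).add ((hI k).const_mul C0)),
      intervalIntegral.integral_add ((hI (k + 1)).const_mul C1) ((hI k).const_mul C0),
      intervalIntegral.integral_const_mul, intervalIntegral.integral_const_mul,
      intervalIntegral.integral_const_mul] at key
  -- assemble
  have hD : (0:ℝ) < ∫ t in (0:ℝ)..1, t ^ p * (1 - t) ^ q := aux_pos p q hp hq
  simp only [T, Bop, ← hp_def, ← hq_def, Nat.add_sub_cancel,
    show k + 1 + 1 = k + 2 by omega]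
  rw [hC2, hC1, hC0] at key
  push_cast at key ⊢
  rw [← mul_div_assoc, ← mul_div_assoc, ← mul_div_assoc, ← add_div]
  congr 1
  linear_combination -key
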